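/- arXiv:2002.10157 — 4 statements merged into one kernel-verified Lean document; each statement's English description precedes it below -/
import Mathlib

section
/- Let δ ∈ (0,1] and θ ≥ 0. Let Λ : ℝ → [0,∞) be measurable and let λ = λ^ℜ + iλ^ℑ : ℝ × P₂(ℝ) → ℂ be such that, for every k ∈ ℝ and all μ, ν ∈ P₂(ℝ), one has |λ(k,μ)| ≤ Λ(k) and |λ(k,μ) − λ(k,ν)| ≤ Λ(k)·d_TV(μ,ν)^δ. Then there exist a constant C > 0 depending only on δ (in particular independent of k, μ, ν and θ) and a function λ̃ = λ̃^ℜ + iλ̃^ℑ : ℝ × P₂(ℝ) → ℂ such that for every k ∈ ℝ and all μ, ν ∈ P₂(ℝ): |λ(k,μ) − λ̃(k,μ)| ≤ C·⟨k⟩^{−θδ}·Λ(k) and |λ̃(k,μ) − λ̃(k,ν)| ≤ C·⟨k⟩^{θ(1−δ)}·Λ(k)·d_TV(μ,ν). -/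
open MeasureTheory

/-- The "Japanese bracket" `⟨k⟩ = (1+k²)^{1/2}`. -/
noncomputable def jap (k : ℝ) : ℝ := Real.sqrt (1 + k ^ 2)

/-- Borel probability measures on ℝ with finite second moment. -/
def P2 : Type := {μ : Measure ℝ // IsProbabilityMeasure μ ∧ Integrable (fun x => x ^ 2) μ}

/-- Total variation distance `d_TV(μ,ν) = 2 sup_A |μ(A) − ν(A)|`. -/
noncomputable def dTV (μ ν : Measure ℝ) : ℝ :=
  2 * ⨆ A : {A : Set ℝ // MeasurableSet A}, |(μ A.1).toReal - (ν A.1).toReal|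

namespace Aux

instance : Nonempty P2 := by
  refine ⟨⟨Measure.dirac 0, inferInstance, ?_⟩⟩
  exact (integrable_const ((0:ℝ) ^ 2)).congr (MeasureTheory.ae_eq_dirac (fun x : ℝ => x ^ 2)).symm

lemma toReal_le_one (μ : Measure ℝ) [IsProbabilityMeasure μ] (A : Set ℝ) :
    (μ A).toReal ≤ 1 := by
  have h := prob_le_one (μ := μ) (s := A)
  simpa using ENNReal.toReal_mono (by norm_num) h

lemma bddAboveTV (μ ν : Measure ℝ) [IsProbabilityMeasure μ] [IsProbabilityMeasure ν] :
    BddAbove (Set.range fun A : {A : Set ℝ // MeasurableSet A} =>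
      |(μ A.1).toReal - (ν A.1).toReal|) := by
  refine ⟨1, ?_⟩
  rintro x ⟨A, rfl⟩
  have h1 := toReal_le_one μ A.1
  have h2 := toReal_le_one ν A.1
  have h3 : 0 ≤ (μ A.1).toReal := ENNReal.toReal_nonneg
  have h4 : 0 ≤ (ν A.1).toReal := ENNReal.toReal_nonneg
  rw [abs_sub_le_iff]; constructor <;> linarith

lemma dTV_nonneg (μ ν : Measure ℝ) [IsProbabilityMeasure μ] [IsProbabilityMeasure ν] :
    0 ≤ dTV μ ν := by
  have h := le_ciSup (bddAboveTV μ ν) ⟨∅, MeasurableSet.empty⟩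
  have : (0:ℝ) ≤ ⨆ A : {A : Set ℝ // MeasurableSet A}, |(μ A.1).toReal - (ν A.1).toReal| :=
    le_trans (abs_nonneg _) h
  unfold dTV; linarith

lemma dTV_self (μ : Measure ℝ) : dTV μ μ = 0 := by
  unfold dTV
  simp

lemma dTV_comm (μ ν : Measure ℝ) : dTV μ ν = dTV ν μ := by
  unfold dTV
  congr 1
  apply iSup_congr
  intro A
  rw [abs_sub_comm]

lemma dTV_triangle (μ ν ρ : Measure ℝ) [IsProbabilityMeasure μ] [IsProbabilityMeasure ν]
    [IsProbabilityMeasure ρ] : dTV μ ρ ≤ dTV μ ν + dTV ν ρ := by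
  unfold dTV
  rw [← mul_add]
  have : (⨆ A : {A : Set ℝ // MeasurableSet A}, |(μ A.1).toReal - (ρ A.1).toReal|) ≤
      (⨆ A : {A : Set ℝ // MeasurableSet A}, |(μ A.1).toReal - (ν A.1).toReal|) +
      (⨆ A : {A : Set ℝ // MeasurableSet A}, |(ν A.1).toReal - (ρ A.1).toReal|) := by
    refine ciSup_le fun A => ?_
    calc |(μ A.1).toReal - (ρ A.1).toReal|
        ≤ |(μ A.1).toReal - (ν A.1).toReal| + |(ν A.1).toReal - (ρ A.1).toReal| :=
          abs_sub_le _ _ _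
      _ ≤ _ := add_le_add (le_ciSup (bddAboveTV μ ν) A) (le_ciSup (bddAboveTV ν ρ) A)
  linarith

/-- The key scalar inequality: `d^δ - ε^(δ-1) d ≤ ε^δ` for `d ≥ 0`, `ε > 0`, `0 < δ ≤ 1`. -/
lemma key_ineq {δ ε d : ℝ} (hδ0 : 0 < δ) (hδ1 : δ ≤ 1) (hε : 0 < ε) (hd : 0 ≤ d) :
    d ^ δ - ε ^ (δ - 1) * d ≤ ε ^ δ := by
  rcases le_total d ε with h | h
  · have h1 : d ^ δ ≤ ε ^ δ := Real.rpow_le_rpow hd h hδ0.le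
    have h2 : 0 ≤ ε ^ (δ - 1) * d := mul_nonneg (Real.rpow_nonneg hε.le _) hd
    linarith
  · have hd0 : 0 < d := lt_of_lt_of_le hε h
    have h1 : d ^ δ = d ^ (δ - 1) * d := by
      rw [← Real.rpow_add_one hd0.ne' (δ - 1)]; ring_nf
    have h2 : d ^ (δ - 1) ≤ ε ^ (δ - 1) :=
      Real.rpow_le_rpow_of_nonpos hε h (by linarith)
    have h3 : d ^ (δ - 1) * d ≤ ε ^ (δ - 1) * d := by
      exact mul_le_mul_of_nonneg_right h2 hd
    have h4 : 0 ≤ ε ^ δ := Real.rpow_nonneg hε.le _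
    linarith [h1 ▸ h3]

end Aux

open Aux in
theorem stmt0 (δ : ℝ) (hδ0 : 0 < δ) (hδ1 : δ ≤ 1) :
    ∃ C > (0:ℝ), ∀ θ : ℝ, 0 ≤ θ →
      ∀ Λ : ℝ → ℝ, Measurable Λ → (∀ k, 0 ≤ Λ k) →
      ∀ lam : ℝ → P2 → ℂ,
        (∀ k μ, ‖lam k μ‖ ≤ Λ k) →
        (∀ (k : ℝ) (μ ν : P2), ‖lam k μ - lam k ν‖ ≤ Λ k * dTV μ.1 ν.1 ^ δ) →
        ∃ lam' : ℝ → P2 → ℂ,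
          (∀ (k : ℝ) (μ : P2),
            ‖lam k μ - lam' k μ‖ ≤ C * jap k ^ (-(θ * δ)) * Λ k) ∧
          (∀ (k : ℝ) (μ ν : P2),
            ‖lam' k μ - lam' k ν‖
              ≤ C * jap k ^ (θ * (1 - δ)) * Λ k * dTV μ.1 ν.1) := by
  refine ⟨2, by norm_num, ?_⟩
  intro θ hθ Λ hΛm hΛ0 lam hbd hH
  -- probability instances
  have inst1 : ∀ μ : P2, IsProbabilityMeasure μ.1 := fun μ => μ.2.1
  -- japanese bracket positivity
  have hjap : ∀ k : ℝ, 1 ≤ jap k := by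
    intro k
    have : (1:ℝ) ≤ 1 + k ^ 2 := by nlinarith [sq_nonneg k]
    calc (1:ℝ) = Real.sqrt 1 := by simp
      _ ≤ Real.sqrt (1 + k ^ 2) := Real.sqrt_le_sqrt this
  have hjap0 : ∀ k : ℝ, 0 < jap k := fun k => lt_of_lt_of_le one_pos (hjap k)
  -- ε and L
  set ε : ℝ → ℝ := fun k => jap k ^ (-θ) with hε_def
  have hε0 : ∀ k, 0 < ε k := fun k => Real.rpow_pos_of_pos (hjap0 k) _
  set L : ℝ → ℝ := fun k => Λ k * ε k ^ (δ - 1) with hL_def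
  have hL0 : ∀ k, 0 ≤ L k := fun k => mul_nonneg (hΛ0 k) (Real.rpow_nonneg (hε0 k).le _)
  -- real and imaginary inf-convolutions
  classical
  -- generic construction for a real-valued component f with |f μ - f ν| ≤ Λ k d^δ, |f| ≤ Λ k
  have main : ∀ (k : ℝ) (f : P2 → ℝ), (∀ μ, |f μ| ≤ Λ k) →
      (∀ μ ν, |f μ - f ν| ≤ Λ k * dTV μ.1 ν.1 ^ δ) →
      ∃ g : P2 → ℝ,
        (∀ μ, |f μ - g μ| ≤ Λ k * ε k ^ δ) ∧
        (∀ μ ν, |g μ - g ν| ≤ L k * dTV μ.1 ν.1) := by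
    intro k f hfb hfH
    set g : P2 → ℝ := fun μ => ⨅ ν : P2, (f ν + L k * dTV μ.1 ν.1) with hg_def
    have hbdd : ∀ μ : P2, BddBelow (Set.range fun ν : P2 => f ν + L k * dTV μ.1 ν.1) := by
      intro μ
      refine ⟨-Λ k, ?_⟩
      rintro x ⟨ν, rfl⟩
      have h1 := hfb ν
      have h2 : 0 ≤ L k * dTV μ.1 ν.1 := by
        have := @dTV_nonneg μ.1 ν.1 (inst1 μ) (inst1 ν)
        exact mul_nonneg (hL0 k) this
      have := neg_abs_le (f ν)
      show -Λ k ≤ f ν + L k * dTV μ.1 ν.1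
      linarith
    have hgle : ∀ μ, g μ ≤ f μ := by
      intro μ
      have := ciInf_le (hbdd μ) μ
      simpa [dTV_self] using this
    have hupper : ∀ μ, f μ - Λ k * ε k ^ δ ≤ g μ := by
      intro μ
      refine le_ciInf fun ν => ?_
      have h1 : f μ - f ν ≤ Λ k * dTV μ.1 ν.1 ^ δ :=
        le_trans (le_abs_self _) (hfH μ ν)
      have hd0 : 0 ≤ dTV μ.1 ν.1 := @dTV_nonneg μ.1 ν.1 (inst1 μ) (inst1 ν)
      have h2 : dTV μ.1 ν.1 ^ δ - ε k ^ (δ - 1) * dTV μ.1 ν.1 ≤ ε k ^ δ :=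
        key_ineq hδ0 hδ1 (hε0 k) hd0
      have h3 : Λ k * (dTV μ.1 ν.1 ^ δ - ε k ^ (δ - 1) * dTV μ.1 ν.1) ≤ Λ k * ε k ^ δ :=
        mul_le_mul_of_nonneg_left h2 (hΛ0 k)
      have hLd : L k * dTV μ.1 ν.1 = Λ k * (ε k ^ (δ - 1) * dTV μ.1 ν.1) := by
        rw [hL_def]; ring
      nlinarith [h1, h3]
    have hlip : ∀ μ ν, g μ ≤ g ν + L k * dTV μ.1 ν.1 := by
      intro μ ν
      have : g μ - L k * dTV μ.1 ν.1 ≤ g ν := by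
        refine le_ciInf fun ρ => ?_
        have htri : dTV μ.1 ρ.1 ≤ dTV μ.1 ν.1 + dTV ν.1 ρ.1 :=
          @dTV_triangle μ.1 ν.1 ρ.1 (inst1 μ) (inst1 ν) (inst1 ρ)
        have h1 : g μ ≤ f ρ + L k * dTV μ.1 ρ.1 := ciInf_le (hbdd μ) ρ
        have h2 : L k * dTV μ.1 ρ.1 ≤ L k * (dTV μ.1 ν.1 + dTV ν.1 ρ.1) :=
          mul_le_mul_of_nonneg_left htri (hL0 k)
        nlinarith
      linarith
    refine ⟨g, fun μ => ?_, fun μ ν => ?_⟩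
    · rw [abs_sub_le_iff]
      constructor
      · linarith [hupper μ]
      · have := hgle μ
        have hnn : 0 ≤ Λ k * ε k ^ δ :=
          mul_nonneg (hΛ0 k) (Real.rpow_nonneg (hε0 k).le _)
        linarith
    · rw [abs_sub_le_iff]
      constructor
      · linarith [hlip μ ν]
      · have := hlip ν μ
        rw [dTV_comm ν.1 μ.1] at this
        linarith
  -- apply to real and imaginary parts
  have hre : ∀ k, ∃ g : P2 → ℝ,
      (∀ μ, |(lam k μ).re - g μ| ≤ Λ k * ε k ^ δ) ∧
      (∀ μ ν, |g μ - g ν| ≤ L k * dTV μ.1 ν.1) := by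
    intro k
    refine main k (fun μ => (lam k μ).re) (fun μ => ?_) (fun μ ν => ?_)
    · exact le_trans (Complex.abs_re_le_norm _) (hbd k μ)
    · have : |(lam k μ).re - (lam k ν).re| = |(lam k μ - lam k ν).re| := by
        simp [Complex.sub_re]
      rw [this]
      exact le_trans (Complex.abs_re_le_norm _) (hH k μ ν)
  have him : ∀ k, ∃ g : P2 → ℝ,
      (∀ μ, |(lam k μ).im - g μ| ≤ Λ k * ε k ^ δ) ∧
      (∀ μ ν, |g μ - g ν| ≤ L k * dTV μ.1 ν.1) := by
    intro k
    refine main k (fun μ => (lam k μ).im) (fun μ => ?_) (fun μ ν => ?_)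
    · exact le_trans (Complex.abs_im_le_norm _) (hbd k μ)
    · have : |(lam k μ).im - (lam k ν).im| = |(lam k μ - lam k ν).im| := by
        simp [Complex.sub_im]
      rw [this]
      exact le_trans (Complex.abs_im_le_norm _) (hH k μ ν)
  choose gre hre1 hre2 using hre
  choose gim him1 him2 using him
  refine ⟨fun k μ => Complex.mk (gre k μ) (gim k μ), fun k μ => ?_, fun k μ ν => ?_⟩
  · -- approximation bound
    have habs : ‖lam k μ - ⟨gre k μ, gim k μ⟩‖ ≤
        |(lam k μ).re - gre k μ| + |(lam k μ).im - gim k μ| := by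
      have := Complex.norm_le_abs_re_add_abs_im (lam k μ - ⟨gre k μ, gim k μ⟩)
      simpa [Complex.sub_re, Complex.sub_im] using this
    have h1 := hre1 k μ
    have h2 := him1 k μ
    have hεδ : ε k ^ δ = jap k ^ (-(θ * δ)) := by
      simp only [hε_def]
      rw [← Real.rpow_mul (hjap0 k).le]
      congr 1; ring
    calc ‖lam k μ - ⟨gre k μ, gim k μ⟩‖
        ≤ |(lam k μ).re - gre k μ| + |(lam k μ).im - gim k μ| := habs
      _ ≤ Λ k * ε k ^ δ + Λ k * ε k ^ δ := add_le_add h1 h2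
      _ = 2 * jap k ^ (-(θ * δ)) * Λ k := by rw [hεδ]; ring
  · -- Lipschitz bound
    have habs : ‖(⟨gre k μ, gim k μ⟩ : ℂ) - ⟨gre k ν, gim k ν⟩‖ ≤
        |gre k μ - gre k ν| + |gim k μ - gim k ν| := by
      have := Complex.norm_le_abs_re_add_abs_im
        ((⟨gre k μ, gim k μ⟩ : ℂ) - ⟨gre k ν, gim k ν⟩)
      simpa [Complex.sub_re, Complex.sub_im] using this
    have h1 := hre2 k μ ν
    have h2 := him2 k μ ν
    have hεδ : ε k ^ (δ - 1) = jap k ^ (θ * (1 - δ)) := by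
      simp only [hε_def]
      rw [← Real.rpow_mul (hjap0 k).le]
      congr 1; ring
    calc ‖(⟨gre k μ, gim k μ⟩ : ℂ) - ⟨gre k ν, gim k ν⟩‖
        ≤ |gre k μ - gre k ν| + |gim k μ - gim k ν| := habs
      _ ≤ L k * dTV μ.1 ν.1 + L k * dTV μ.1 ν.1 := add_le_add h1 h2
      _ = 2 * jap k ^ (θ * (1 - δ)) * Λ k * dTV μ.1 ν.1 := by
          simp only [hL_def, hεδ]; ring
end

section
/- Let δ ∈ (0,1] and let u : P₂(ℝ) → ℝ satisfy |u(μ)| ≤ 1 for every μ ∈ P₂(ℝ) and |u(μ) − u(ν)| ≤ d_TV(μ,ν)^δ for all μ, ν ∈ P₂(ℝ). Then there exists a constant C > 0 depending only on δ such that for every ε > 0 there exists a function u^ε : P₂(ℝ) → ℝ with the following three properties: (a) |u^ε(μ) − u(μ)| ≤ C·ε^{δ/(2−δ)} for every μ ∈ P₂(ℝ); (b) |u^ε(μ) − u^ε(ν)| ≤ C·ε^{(δ−1)/(2−δ)}·d_TV(μ,ν) for all μ, ν ∈ P₂(ℝ); (c) |u^ε(μ) − u^ε(ν)| ≤ C·d_TV(μ,ν)^δ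 for all μ, ν ∈ P₂(ℝ). -/
open MeasureTheory

instance : Nonempty {A : Set ℝ // MeasurableSet A} := ⟨⟨∅, MeasurableSet.empty⟩⟩

instance : Nonempty P2 := by
  refine ⟨⟨Measure.dirac 0, ⟨Measure.dirac.isProbabilityMeasure, ?_⟩⟩⟩
  refine ⟨(measurable_id.pow_const 2).aestronglyMeasurable, ?_⟩
  simp [HasFiniteIntegral, lintegral_dirac]

lemma dTV_nonneg (μ ν : Measure ℝ) : 0 ≤ dTV μ ν := by
  have : (0:ℝ) ≤ ⨆ A : {A : Set ℝ // MeasurableSet A}, |(μ A.1).toReal - (ν A.1).toReal| :=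
    Real.iSup_nonneg fun A => abs_nonneg _
  unfold dTV; linarith

lemma dTV_self (μ : Measure ℝ) : dTV μ μ = 0 := by
  unfold dTV; simp

lemma dTV_comm (μ ν : Measure ℝ) : dTV μ ν = dTV ν μ := by
  unfold dTV
  congr 1
  apply congrArg
  funext A
  rw [abs_sub_comm]

lemma measure_toReal_le_one (μ : Measure ℝ) [IsProbabilityMeasure μ] (A : Set ℝ) :
    (μ A).toReal ≤ 1 := by
  have h1 : μ A ≤ 1 := prob_le_one
  have := ENNReal.toReal_mono (by simp) h1
  simpa using this

lemma dTV_bdd (μ ν : Measure ℝ) [IsProbabilityMeasure μ] [IsProbabilityMeasure ν] :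
    BddAbove (Set.range fun A : {A : Set ℝ // MeasurableSet A} =>
      |(μ A.1).toReal - (ν A.1).toReal|) := by
  refine ⟨1, ?_⟩
  rintro x ⟨A, rfl⟩
  have h1 := measure_toReal_le_one μ A.1
  have h2 := measure_toReal_le_one ν A.1
  have h3 : (0:ℝ) ≤ (μ A.1).toReal := ENNReal.toReal_nonneg
  have h4 : (0:ℝ) ≤ (ν A.1).toReal := ENNReal.toReal_nonneg
  rw [abs_sub_le_iff]
  constructor <;> linarith

lemma dTV_triangle (μ ν ρ : Measure ℝ) [IsProbabilityMeasure μ] [IsProbabilityMeasure ν]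
    [IsProbabilityMeasure ρ] : dTV μ ρ ≤ dTV μ ν + dTV ν ρ := by
  unfold dTV
  rw [← mul_add]
  have h : (⨆ A : {A : Set ℝ // MeasurableSet A}, |(μ A.1).toReal - (ρ A.1).toReal|) ≤
      (⨆ A : {A : Set ℝ // MeasurableSet A}, |(μ A.1).toReal - (ν A.1).toReal|) +
      (⨆ A : {A : Set ℝ // MeasurableSet A}, |(ν A.1).toReal - (ρ A.1).toReal|) := by
    apply ciSup_le
    intro A
    calc |(μ A.1).toReal - (ρ A.1).toReal|
        ≤ |(μ A.1).toReal - (ν A.1).toReal| + |(ν A.1).toReal - (ρ A.1).toReal| :=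
          abs_sub_le _ _ _
      _ ≤ _ := add_le_add (le_ciSup (dTV_bdd μ ν) A) (le_ciSup (dTV_bdd ν ρ) A)
  linarith

theorem stmt1 (δ : ℝ) (hδ0 : 0 < δ) (hδ1 : δ ≤ 1) :
    ∃ C > (0:ℝ), ∀ u : P2 → ℝ,
      (∀ μ, |u μ| ≤ 1) →
      (∀ μ ν : P2, |u μ - u ν| ≤ dTV μ.1 ν.1 ^ δ) →
      ∀ ε : ℝ, 0 < ε →
        ∃ uε : P2 → ℝ,
          (∀ μ, |uε μ - u μ| ≤ C * ε ^ (δ / (2 - δ))) ∧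
          (∀ μ ν : P2, |uε μ - uε ν| ≤ C * ε ^ ((δ - 1) / (2 - δ)) * dTV μ.1 ν.1) ∧
          (∀ μ ν : P2, |uε μ - uε ν| ≤ C * dTV μ.1 ν.1 ^ δ) := by
  have h2δ : (0:ℝ) < 2 - δ := by linarith
  refine ⟨3, by norm_num, fun u hb hh ε hε => ?_⟩
  by_cases hε1 : 1 ≤ ε
  · -- large ε : take uε = 0
    refine ⟨fun _ => 0, ?_, ?_, ?_⟩
    · intro μ
      have h1 : (1:ℝ) ≤ ε ^ (δ / (2 - δ)) :=
        Real.one_le_rpow hε1 (div_nonneg hδ0.le h2δ.le)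
      have := hb μ
      rw [zero_sub, abs_neg]
      nlinarith
    · intro μ ν
      simp only [sub_self, abs_zero]
      have h1 : (0:ℝ) ≤ ε ^ ((δ - 1) / (2 - δ)) := Real.rpow_nonneg hε.le _
      have h2 := dTV_nonneg μ.1 ν.1
      positivity
    · intro μ ν
      simp only [sub_self, abs_zero]
      have h2 : (0:ℝ) ≤ dTV μ.1 ν.1 ^ δ := Real.rpow_nonneg (dTV_nonneg μ.1 ν.1) δ
      linarith
  · push_neg at hε1
    set lam : ℝ := ε ^ ((δ - 1) / (2 - δ)) with hlam
    set t0 : ℝ := ε ^ (1 / (2 - δ)) with ht0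
    have hlam_pos : 0 < lam := Real.rpow_pos_of_pos hε _
    have ht0_pos : 0 < t0 := Real.rpow_pos_of_pos hε _
    have ht0δ : t0 ^ δ = ε ^ (δ / (2 - δ)) := by
      rw [ht0, ← Real.rpow_mul hε.le]
      congr 1
      field_simp
    have hlam_eq : t0 ^ (δ - 1) = lam := by
      rw [ht0, ← Real.rpow_mul hε.le, hlam]
      congr 1
      field_simp
    have hkey : ∀ t : ℝ, 0 ≤ t → t ^ δ ≤ lam * t + t0 ^ δ := by
      intro t ht
      rcases le_or_gt t t0 with h | h
      · have h1 : t ^ δ ≤ t0 ^ δ := Real.rpow_le_rpow ht h hδ0.le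
        nlinarith [mul_nonneg hlam_pos.le ht]
      · have htpos : 0 < t := lt_trans ht0_pos h
        have h1 : t ^ (δ - 1) ≤ t0 ^ (δ - 1) :=
          Real.rpow_le_rpow_of_nonpos ht0_pos h.le (by linarith)
        have h2 : t ^ δ = t ^ (δ - 1) * t := by
          rw [← Real.rpow_add_one htpos.ne']
          ring_nf
        have h3 : t ^ (δ - 1) * t ≤ lam * t := by
          apply mul_le_mul_of_nonneg_right _ ht
          rw [← hlam_eq]; exact h1
        have h4 : (0:ℝ) ≤ t0 ^ δ := Real.rpow_nonneg ht0_pos.le δ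
        linarith [h2 ▸ h3]
    have hsmall : ∀ t : ℝ, 0 ≤ t → t ≤ t0 → lam * t ≤ t ^ δ := by
      intro t ht htle
      rcases eq_or_lt_of_le ht with h0 | h0
      · rw [← h0, Real.zero_rpow hδ0.ne', mul_zero]
      · have h1 : t0 ^ (δ - 1) ≤ t ^ (δ - 1) :=
          Real.rpow_le_rpow_of_nonpos h0 htle (by linarith)
        have h2 : t ^ δ = t ^ (δ - 1) * t := by
          rw [← Real.rpow_add_one h0.ne']
          ring_nf
        rw [h2]
        apply mul_le_mul_of_nonneg_right _ ht
        rw [← hlam_eq]; exact h1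
    set uε : P2 → ℝ := fun μ => ⨅ ν : P2, (u ν + lam * dTV μ.1 ν.1) with huε
    have hbdd : ∀ μ : P2, BddBelow (Set.range fun ν : P2 => u ν + lam * dTV μ.1 ν.1) := by
      intro μ
      refine ⟨-1, ?_⟩
      rintro x ⟨ν, rfl⟩
      have h1 := abs_le.mp (hb ν)
      have h2 := mul_nonneg hlam_pos.le (dTV_nonneg μ.1 ν.1)
      simp only
      linarith [h1.1]
    have h_le : ∀ μ : P2, uε μ ≤ u μ := by
      intro μ
      have := ciInf_le (hbdd μ) μ
      rwa [dTV_self, mul_zero, add_zero] at this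
    have h_ge : ∀ μ : P2, u μ - t0 ^ δ ≤ uε μ := by
      intro μ
      apply le_ciInf
      intro ν
      have h1 := (abs_le.mp (hh μ ν)).2
      have h2 := le_trans (le_abs_self _) (hh μ ν)
      have h3 := hkey (dTV μ.1 ν.1) (dTV_nonneg μ.1 ν.1)
      linarith
    have ht0δ_nonneg : (0:ℝ) ≤ t0 ^ δ := Real.rpow_nonneg ht0_pos.le δ
    have ha : ∀ μ : P2, |uε μ - u μ| ≤ t0 ^ δ := by
      intro μ
      rw [abs_le]
      constructor <;> [linarith [h_ge μ]; linarith [h_le μ]]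
    have hLip : ∀ μ ν : P2, uε μ - uε ν ≤ lam * dTV μ.1 ν.1 := by
      intro μ ν
      have key : uε μ - lam * dTV μ.1 ν.1 ≤ uε ν := by
        refine le_ciInf fun ν' => ?_
        haveI := μ.2.1; haveI := ν.2.1; haveI := ν'.2.1
        have h1 : uε μ ≤ u ν' + lam * dTV μ.1 ν'.1 := ciInf_le (hbdd μ) ν'
        have h2 : dTV μ.1 ν'.1 ≤ dTV μ.1 ν.1 + dTV ν.1 ν'.1 := dTV_triangle _ _ _
        have h3 : lam * dTV μ.1 ν'.1 ≤ lam * (dTV μ.1 ν.1 + dTV ν.1 ν'.1) :=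
          mul_le_mul_of_nonneg_left h2 hlam_pos.le
        linarith
      linarith
    have habs : ∀ μ ν : P2, |uε μ - uε ν| ≤ lam * dTV μ.1 ν.1 := by
      intro μ ν
      rw [abs_sub_le_iff]
      refine ⟨hLip μ ν, ?_⟩
      rw [dTV_comm]
      exact hLip ν μ
    refine ⟨uε, ?_, ?_, ?_⟩
    · intro μ
      rw [← ht0δ]
      linarith [ha μ]
    · intro μ ν
      have h1 := habs μ ν
      have h2 := mul_nonneg hlam_pos.le (dTV_nonneg μ.1 ν.1)
      nlinarith
    · intro μ ν
      have hd := dTV_nonneg μ.1 ν.1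
      have hdδ : (0:ℝ) ≤ dTV μ.1 ν.1 ^ δ := Real.rpow_nonneg hd δ
      rcases le_or_gt (dTV μ.1 ν.1) t0 with h | h
      · have h1 := habs μ ν
        have h2 := hsmall (dTV μ.1 ν.1) hd h
        linarith
      · have h1 : |uε μ - uε ν| ≤ |uε μ - u μ| + |u μ - u ν| + |u ν - uε ν| := by
          have := abs_sub_le (uε μ) (u μ) (uε ν)
          have := abs_sub_le (u μ) (u ν) (uε ν)
          linarith [abs_sub_le (uε μ) (u μ) (uε ν), abs_sub_le (u μ) (u ν) (uε ν)]
        have h2 := ha μ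
        have h3 : |u ν - uε ν| ≤ t0 ^ δ := by rw [abs_sub_comm]; exact ha ν
        have h4 := hh μ ν
        have h5 : t0 ^ δ ≤ dTV μ.1 ν.1 ^ δ := Real.rpow_le_rpow ht0_pos.le h.le hδ0.le
        linarith
end

section
/- Let ν be a probability kernel from ℝ to ℝ, i.e. for each x ∈ ℝ, ν(x,·) is a Borel probability measure on ℝ and for each Borel set A ⊆ ℝ the map x ↦ ν(x, A) is measurable. Define g : ℝ × (0,1) → ℝ by g(x, u) := sup{ t ∈ ℝ : ν(x, (−∞, t]) ≤ u }. Then: (a) for every u ∈ (0,1), the map x ↦ g(x,u) is Borel-measurable; (b) for every x ∈ ℝ, the map u ↦ g(x,u) is right-continuous with left limits on (0,1); (c) the map (x,u) ↦ g(x,u) is jointly Borel-measurable on ℝ × (0,1). -/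
open MeasureTheory

open ProbabilityTheory Set Filter in
private lemma quant_nonempty (μ : Measure ℝ) [IsProbabilityMeasure μ] {u : ℝ} (hu : 0 < u) :
    {t : ℝ | cdf μ t ≤ u}.Nonempty := by
  obtain ⟨t, ht⟩ := ((tendsto_cdf_atBot μ).eventually_lt_const hu).exists
  exact ⟨t, ht.le⟩

open ProbabilityTheory Set Filter in
private lemma quant_bdd (μ : Measure ℝ) [IsProbabilityMeasure μ] {u : ℝ} (hu : u < 1) :
    BddAbove {t : ℝ | cdf μ t ≤ u} := by
  obtain ⟨t, ht⟩ := ((tendsto_cdf_atTop μ).eventually_const_lt hu).exists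
  exact ⟨t, fun s hs => le_of_not_gt fun h => ht.not_ge ((monotone_cdf μ h.le).trans hs)⟩

open ProbabilityTheory Set Filter in
private lemma le_quant_iff (μ : Measure ℝ) [IsProbabilityMeasure μ] {u : ℝ}
    (hu : u ∈ Set.Ioo (0:ℝ) 1) (s : ℝ) :
    s ≤ sSup {t : ℝ | cdf μ t ≤ u} ↔ ∀ t < s, cdf μ t ≤ u := by
  constructor
  · intro h t ht
    obtain ⟨t', ht', htt'⟩ := exists_lt_of_lt_csSup (quant_nonempty μ hu.1) (ht.trans_le h)
    exact (monotone_cdf μ htt'.le).trans ht'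
  · intro h
    refine le_of_forall_lt fun c hc => ?_
    have hmem : (c + s) / 2 ∈ {t : ℝ | cdf μ t ≤ u} := h _ (by linarith)
    exact lt_of_lt_of_le (by linarith) (le_csSup (quant_bdd μ hu.2) hmem)

open ProbabilityTheory Set Filter in
private lemma le_quant_iff_rat (μ : Measure ℝ) [IsProbabilityMeasure μ] {u : ℝ}
    (hu : u ∈ Set.Ioo (0:ℝ) 1) (s : ℝ) :
    s ≤ sSup {t : ℝ | cdf μ t ≤ u} ↔ ∀ q : ℚ, (q : ℝ) < s → cdf μ (q : ℝ) ≤ u := by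
  rw [le_quant_iff μ hu]
  constructor
  · exact fun h q hq => h _ hq
  · intro h t ht
    obtain ⟨q, hq1, hq2⟩ := exists_rat_btwn ht
    exact (monotone_cdf μ hq1.le).trans (h q hq2)

open ProbabilityTheory Set Filter in
private lemma quant_mono (μ : Measure ℝ) [IsProbabilityMeasure μ] {u v : ℝ}
    (hu : 0 < u) (hv : v < 1) (huv : u ≤ v) :
    sSup {t : ℝ | cdf μ t ≤ u} ≤ sSup {t : ℝ | cdf μ t ≤ v} :=
  csSup_le_csSup (quant_bdd μ hv) (quant_nonempty μ hu)
    (fun t ht => le_trans ht huv)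

open ProbabilityTheory Set Filter Topology

theorem stmt15 (ν : ℝ → Measure ℝ)
    (hprob : ∀ x, IsProbabilityMeasure (ν x))
    (hmeas : ∀ A : Set ℝ, MeasurableSet A → Measurable (fun x => ν x A)) :
    let g : ℝ → ℝ → ℝ := fun x u => sSup {t : ℝ | (ν x (Set.Iic t)).toReal ≤ u}
    -- (a) measurability in x for each fixed u ∈ (0,1)
    (∀ u ∈ Set.Ioo (0:ℝ) 1, Measurable (fun x => g x u)) ∧
    -- (b) right-continuity and existence of left limits in u on (0,1)
    (∀ x : ℝ, ∀ u ∈ Set.Ioo (0:ℝ) 1,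
      ContinuousWithinAt (fun v => g x v) (Set.Ici u) u ∧
      ∃ l : ℝ, Filter.Tendsto (fun v => g x v) (nhdsWithin u (Set.Iio u)) (nhds l)) ∧
    -- (c) joint measurability on ℝ × (0,1)
    Measurable (fun p : ℝ × (Set.Ioo (0:ℝ) 1) => g p.1 (p.2 : ℝ)) := by
  intro g
  haveI := hprob
  have hg : g = fun x u => sSup {t : ℝ | cdf (ν x) t ≤ u} := by
    funext x u
    show sSup {t : ℝ | (ν x (Set.Iic t)).toReal ≤ u} = _
    congr 1
    ext t
    simp [cdf_eq_real, measureReal_def]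
  rw [hg]
  have hFmeas : ∀ t : ℝ, Measurable (fun x => cdf (ν x) t) := by
    intro t
    have : (fun x => cdf (ν x) t) = fun x => (ν x (Set.Iic t)).toReal := by
      funext x; exact cdf_eq_real _ _
    rw [this]
    exact (hmeas _ measurableSet_Iic).ennreal_toReal
  refine ⟨?_, ?_, ?_⟩
  · -- (a)
    intro u hu
    apply measurable_of_Ici
    intro s
    have hset : (fun x => sSup {t : ℝ | cdf (ν x) t ≤ u}) ⁻¹' Ici s
        = ⋂ q : ℚ, {x : ℝ | (q : ℝ) < s → cdf (ν x) (q : ℝ) ≤ u} := by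
      ext x
      simp only [mem_preimage, mem_Ici, mem_iInter, mem_setOf_eq]
      exact le_quant_iff_rat (ν x) hu s
    rw [hset]
    refine MeasurableSet.iInter fun q => ?_
    by_cases hq : (q : ℝ) < s
    · simp only [hq, true_implies]
      exact measurableSet_le (hFmeas _) measurable_const
    · simp only [hq, false_implies, setOf_true, MeasurableSet.univ]
  · -- (b)
    intro x u hu
    set F := cdf (ν x) with hF
    constructor
    · -- right-continuity
      refine tendsto_order.2 ⟨fun l hl => ?_, fun m hm => ?_⟩
      · filter_upwards [Ico_mem_nhdsGE_of_mem (left_mem_Ico.2 hu.2)] with v hv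
        exact hl.trans_le (quant_mono (ν x) hu.1 hv.2 hv.1)
      · set t0 := sSup {t : ℝ | F t ≤ u} with ht0
        have ht0m : t0 < (t0 + m) / 2 := by linarith
        have hw : u < F ((t0 + m) / 2) := by
          by_contra h
          push_neg at h
          exact absurd (le_csSup (quant_bdd (ν x) hu.2) h) (not_le.2 ht0m)
        have hmem : Ico u 1 ∩ Iio (F ((t0 + m) / 2)) ∈ 𝓝[≥] u := by
          refine inter_mem (Ico_mem_nhdsGE_of_mem (left_mem_Ico.2 hu.2)) ?_
          exact nhdsWithin_le_nhds (Iio_mem_nhds hw)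
        filter_upwards [hmem] with v hv
        have : sSup {t : ℝ | F t ≤ v} ≤ (t0 + m) / 2 := by
          refine csSup_le (quant_nonempty (ν x) (hu.1.trans_le hv.1.1)) fun t ht => ?_
          by_contra hc
          push_neg at hc
          exact absurd ((monotone_cdf (ν x) hc.le).trans ht) (not_le.2 hv.2)
        exact this.trans_lt (by linarith)
    · -- left limit
      refine ⟨sSup ((fun v => sSup {t : ℝ | F t ≤ v}) '' Ioo 0 u), ?_⟩
      have hne : (Ioo (0:ℝ) u).Nonempty := ⟨u / 2, by constructor <;> linarith [hu.1]⟩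
      have hmono : MonotoneOn (fun v => sSup {t : ℝ | F t ≤ v}) (Ioo 0 u) :=
        fun a ha b hb hab => quant_mono (ν x) ha.1 (hb.2.trans hu.2) hab
      have hbdd : BddAbove ((fun v => sSup {t : ℝ | F t ≤ v}) '' Ioo 0 u) := by
        refine ⟨sSup {t : ℝ | F t ≤ u}, ?_⟩
        rintro y ⟨v, hv, rfl⟩
        exact quant_mono (ν x) hv.1 hu.2 hv.2.le
      exact hmono.tendsto_nhdsWithin_Ioo_left hne hbdd
  · -- (c)
    apply measurable_of_Ici
    intro s
    have hset : (fun p : ℝ × (Set.Ioo (0:ℝ) 1) => sSup {t : ℝ | cdf (ν p.1) t ≤ (p.2 : ℝ)})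
          ⁻¹' Ici s
        = ⋂ q : ℚ, {p : ℝ × (Set.Ioo (0:ℝ) 1) |
            (q : ℝ) < s → cdf (ν p.1) (q : ℝ) ≤ (p.2 : ℝ)} := by
      ext p
      simp only [mem_preimage, mem_Ici, mem_iInter, mem_setOf_eq]
      exact le_quant_iff_rat (ν p.1) p.2.2 s
    rw [hset]
    refine MeasurableSet.iInter fun q => ?_
    by_cases hq : (q : ℝ) < s
    · simp only [hq, true_implies]
      exact measurableSet_le ((hFmeas _).comp measurable_fst)
        (measurable_subtype_coe.comp measurable_snd)
    · simp only [hq, false_implies, setOf_true, MeasurableSet.univ]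
end

section
/- Let (Ω, F, ℙ) be a probability space and X, Y : Ω → ℝ random variables, and let κ be a regular version of the conditional distribution of Y given X (a probability kernel from ℝ to ℝ such that for all Borel sets A, B ⊆ ℝ: ℙ(X ∈ A, Y ∈ B) = ∫_A κ(x, B) d(law X)(x)). Let (Ω', F', ℙ') be a probability space carrying a random variable X' : Ω' → ℝ with the same law as X and a random variable U : Ω' → (0,1), uniformly distributed on (0,1) and independent of X'. Define g(x, u) := inf{ t ∈ ℝ : u ≤ κ(x, (−∞, t]) }. Then the pair (X', g(X', U)) has the same law on ℝ² as the pair (X, Y). -/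
open MeasureTheory Set

lemma keylem16 (κ : ℝ → Measure ℝ) (hκprob : ∀ x, IsProbabilityMeasure (κ x))
    (x u : ℝ) (hu0 : 0 < u) (hu1 : u < 1) (c : ℝ) :
    sInf {t : ℝ | u ≤ (κ x (Set.Iic t)).toReal} ≤ c ↔ u ≤ (κ x (Set.Iic c)).toReal := by
  haveI := hκprob x
  set S := {t : ℝ | u ≤ (κ x (Set.Iic t)).toReal} with hS
  have hfin : ∀ t : ℝ, κ x (Set.Iic t) ≠ ⊤ := fun t => measure_ne_top _ _
  have hmemofreal : ∀ {t : ℝ}, t ∈ S ↔ ENNReal.ofReal u ≤ κ x (Set.Iic t) := by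
    intro t
    rw [hS, Set.mem_setOf_eq, ENNReal.ofReal_le_iff_le_toReal (hfin t)]
  have hup : ∀ {s t : ℝ}, s ∈ S → s ≤ t → t ∈ S := by
    intro s t hs hst
    exact hmemofreal.mpr ((hmemofreal.mp hs).trans
      (measure_mono (Set.Iic_subset_Iic.mpr hst)))
  have hne : S.Nonempty := by
    have hU : (⋃ n : ℕ, Set.Iic ((n:ℕ):ℝ)) = Set.univ := by
      ext y
      simp only [Set.mem_iUnion, Set.mem_Iic, Set.mem_univ, iff_true]
      exact exists_nat_ge y
    have hdir : Directed (· ⊆ ·) (fun n : ℕ => Set.Iic ((n:ℕ):ℝ)) := by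
      apply Monotone.directed_le
      intro a b hab
      exact Set.Iic_subset_Iic.mpr (by exact_mod_cast hab)
    have hsup : (⨆ n : ℕ, κ x (Set.Iic ((n:ℕ):ℝ))) = 1 := by
      rw [← hdir.measure_iUnion, hU, measure_univ]
    have : ENNReal.ofReal u < ⨆ n : ℕ, κ x (Set.Iic ((n:ℕ):ℝ)) := by
      rw [hsup]; exact ENNReal.ofReal_lt_one.mpr hu1
    obtain ⟨n, hn⟩ := lt_iSup_iff.mp this
    exact ⟨(n:ℝ), hmemofreal.mpr hn.le⟩
  have hbdd : BddBelow S := by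
    have hI : (⋂ n : ℕ, Set.Iic (-((n:ℕ):ℝ))) = ∅ := by
      ext y
      simp only [Set.mem_iInter, Set.mem_Iic, Set.mem_empty_iff_false, iff_false, not_forall,
        not_le]
      obtain ⟨n, hn⟩ := exists_nat_gt (-y)
      exact ⟨n, by linarith⟩
    have hdir : Directed (· ⊇ ·) (fun n : ℕ => Set.Iic (-((n:ℕ):ℝ))) := by
      apply Antitone.directed_ge
      intro a b hab
      exact Set.Iic_subset_Iic.mpr (by simp; exact_mod_cast hab)
    have hinf : (⨅ n : ℕ, κ x (Set.Iic (-((n:ℕ):ℝ)))) = 0 := by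
      rw [← Directed.measure_iInter (fun n => measurableSet_Iic.nullMeasurableSet) hdir
        ⟨0, hfin _⟩, hI, measure_empty]
    have : (⨅ n : ℕ, κ x (Set.Iic (-((n:ℕ):ℝ)))) < ENNReal.ofReal u := by
      rw [hinf]; exact ENNReal.ofReal_pos.mpr hu0
    obtain ⟨n, hn⟩ := iInf_lt_iff.mp this
    refine ⟨-((n:ℕ):ℝ), fun t ht => ?_⟩
    by_contra h
    push_neg at h
    exact absurd ((hmemofreal.mp ht).trans (measure_mono (Set.Iic_subset_Iic.mpr h.le)))
      (not_le.mpr hn)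
  have hmem : sInf S ∈ S := by
    rw [hmemofreal]
    have hIic : Set.Iic (sInf S) = ⋂ n : ℕ, Set.Iic (sInf S + 1/(n+1)) := by
      ext y
      simp only [Set.mem_Iic, Set.mem_iInter]
      constructor
      · intro h n
        have h1 : (0:ℝ) < 1/((n:ℝ)+1) := by positivity
        linarith
      · intro h
        by_contra hc
        push_neg at hc
        obtain ⟨n, hn⟩ := exists_nat_one_div_lt (show (0:ℝ) < y - sInf S by linarith)
        have := h n
        linarith
    have hanti : Antitone (fun n : ℕ => Set.Iic (sInf S + 1/((n:ℝ)+1))) := by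
      intro a b hab
      apply Set.Iic_subset_Iic.mpr
      have h1 : (1:ℝ)/((b:ℝ)+1) ≤ 1/((a:ℝ)+1) := by
        apply one_div_le_one_div_of_le (by positivity)
        have : (a:ℝ) ≤ b := by exact_mod_cast hab
        linarith
      linarith
    rw [hIic, Directed.measure_iInter (fun n => measurableSet_Iic.nullMeasurableSet)
      hanti.directed_ge ⟨0, hfin _⟩]
    refine le_iInf fun n => ?_
    have hlt : sInf S < sInf S + 1/((n:ℝ)+1) := by
      have : (0:ℝ) < 1/((n:ℝ)+1) := by positivity
      linarith
    obtain ⟨t, htS, htlt⟩ := (csInf_lt_iff hbdd hne).mp hlt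
    exact hmemofreal.mp (hup htS htlt.le)
  constructor
  · intro h
    exact hup hmem h
  · intro h
    exact csInf_le hbdd h

lemma vollem16 (c : ℝ) (h0 : 0 ≤ c) (h1 : c ≤ 1) :
    volume (Set.Ioo (0:ℝ) 1 ∩ Set.Iic c) = ENNReal.ofReal c := by
  rcases lt_or_eq_of_le h1 with h | h
  · have : Set.Ioo (0:ℝ) 1 ∩ Set.Iic c = Set.Ioc 0 c := by
      ext y
      simp only [Set.mem_inter_iff, Set.mem_Ioo, Set.mem_Iic, Set.mem_Ioc]
      constructor
      · rintro ⟨⟨hy0, _⟩, hyc⟩; exact ⟨hy0, hyc⟩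
      · rintro ⟨hy0, hyc⟩; exact ⟨⟨hy0, lt_of_le_of_lt hyc h⟩, hyc⟩
    rw [this, Real.volume_Ioc, sub_zero]
  · subst h
    have : Set.Ioo (0:ℝ) 1 ∩ Set.Iic 1 = Set.Ioo 0 1 := by
      apply Set.inter_eq_left.mpr
      intro y hy; exact hy.2.le
    rw [this, Real.volume_Ioo]; norm_num

theorem stmt16 {Ω Ω' : Type*} [MeasurableSpace Ω] [MeasurableSpace Ω']
    (P : Measure Ω) [IsProbabilityMeasure P]
    (P' : Measure Ω') [IsProbabilityMeasure P']
    (X Y : Ω → ℝ) (hX : Measurable X) (hY : Measurable Y)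
    -- κ is a probability kernel from ℝ to ℝ ...
    (κ : ℝ → Measure ℝ) (hκprob : ∀ x, IsProbabilityMeasure (κ x))
    (hκmeas : ∀ B : Set ℝ, MeasurableSet B → Measurable (fun x => κ x B))
    -- ... which is a regular version of the conditional distribution of Y given X
    (hreg : ∀ A B : Set ℝ, MeasurableSet A → MeasurableSet B →
      P (X ⁻¹' A ∩ Y ⁻¹' B) = ∫⁻ x in A, κ x B ∂(P.map X))
    (X' : Ω' → ℝ) (hX' : Measurable X') (hlawX : P'.map X' = P.map X)
    (U : Ω' → ℝ) (hU : Measurable U)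
    (hUlaw : P'.map U = volume.restrict (Set.Ioo (0:ℝ) 1))
    (hindep : ProbabilityTheory.IndepFun X' U P') :
    P'.map (fun ω => (X' ω, sInf {t : ℝ | U ω ≤ (κ (X' ω) (Set.Iic t)).toReal}))
      = P.map (fun ω => (X ω, Y ω)) := by
  haveI : IsProbabilityMeasure (P.map X) := Measure.isProbabilityMeasure_map hX.aemeasurable
  haveI : IsProbabilityMeasure (volume.restrict (Set.Ioo (0:ℝ) 1)) := by
    constructor
    rw [Measure.restrict_apply_univ, Real.volume_Ioo]
    norm_num
  set μ := P.map X with hμ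
  set ν := volume.restrict (Set.Ioo (0:ℝ) 1) with hν
  have hFmeas : ∀ t : ℝ, Measurable fun x => (κ x (Set.Iic t)).toReal :=
    fun t => (hκmeas _ measurableSet_Iic).ennreal_toReal
  have hF0 : ∀ x t : ℝ, 0 ≤ (κ x (Set.Iic t)).toReal := fun x t => ENNReal.toReal_nonneg
  have hF1 : ∀ x t : ℝ, (κ x (Set.Iic t)).toReal ≤ 1 := by
    intro x t
    haveI := hκprob x
    exact ENNReal.toReal_le_of_le_ofReal zero_le_one (by simpa using prob_le_one)
  set G : ℝ × ℝ → ℝ := fun p =>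
    if p.2 ∈ Set.Ioo (0:ℝ) 1 then sInf {t : ℝ | p.2 ≤ (κ p.1 (Set.Iic t)).toReal} else 0
    with hG
  have hGmeas : Measurable G := by
    apply measurable_of_Iic
    intro c
    have hset : G ⁻¹' Set.Iic c =
        ({p : ℝ × ℝ | p.2 ∈ Set.Ioo (0:ℝ) 1} ∩ {p : ℝ × ℝ | p.2 ≤ (κ p.1 (Set.Iic c)).toReal}) ∪
        ({p : ℝ × ℝ | p.2 ∈ Set.Ioo (0:ℝ) 1}ᶜ ∩ {_p : ℝ × ℝ | (0:ℝ) ≤ c}) := by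
      ext ⟨x, v⟩
      by_cases hv : v ∈ Set.Ioo (0:ℝ) 1
      · simp only [Set.mem_preimage, Set.mem_Iic, hG, if_pos hv, Set.mem_union,
          Set.mem_inter_iff, Set.mem_setOf_eq, Set.mem_compl_iff, hv, not_true_eq_false,
          false_and, or_false, true_and]
        exact keylem16 κ hκprob x v hv.1 hv.2 c
      · simp only [Set.mem_preimage, Set.mem_Iic, hG, if_neg hv, Set.mem_union,
          Set.mem_inter_iff, Set.mem_setOf_eq, Set.mem_compl_iff, hv, not_false_eq_true,
          false_and, false_or, true_and, if_false]
    rw [hset]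
    have h1 : MeasurableSet {p : ℝ × ℝ | p.2 ∈ Set.Ioo (0:ℝ) 1} :=
      measurable_snd measurableSet_Ioo
    have h2 : MeasurableSet {p : ℝ × ℝ | p.2 ≤ (κ p.1 (Set.Iic c)).toReal} :=
      measurableSet_le measurable_snd ((hFmeas c).comp measurable_fst)
    have h3 : MeasurableSet {_p : ℝ × ℝ | (0:ℝ) ≤ c} := MeasurableSet.const _
    exact (h1.inter h2).union (h1.compl.inter h3)
  set h : ℝ × ℝ → ℝ × ℝ := fun p => (p.1, G p) with hh
  have hhmeas : Measurable h := measurable_fst.prodMk hGmeas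
  have hUae : ∀ᵐ ω ∂P', U ω ∈ Set.Ioo (0:ℝ) 1 := by
    have h0 : P' (U ⁻¹' (Set.Ioo (0:ℝ) 1)ᶜ) = 0 := by
      rw [← Measure.map_apply hU measurableSet_Ioo.compl, hUlaw,
        Measure.restrict_apply measurableSet_Ioo.compl]
      simp
    have h1 := measure_eq_zero_iff_ae_notMem.mp h0
    filter_upwards [h1] with ω hω
    simpa using hω
  have hmain : P'.map (fun ω => (X' ω, sInf {t : ℝ | U ω ≤ (κ (X' ω) (Set.Iic t)).toReal}))
      = (μ.prod ν).map h := by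
    have hae : (fun ω => (X' ω, sInf {t : ℝ | U ω ≤ (κ (X' ω) (Set.Iic t)).toReal}))
        =ᵐ[P'] (fun ω => h (X' ω, U ω)) := by
      filter_upwards [hUae] with ω hω
      simp only [hh, hG, if_pos hω]
    rw [Measure.map_congr hae]
    have hcomp : (fun ω => h (X' ω, U ω)) = h ∘ (fun ω => (X' ω, U ω)) := rfl
    rw [hcomp, ← Measure.map_map hhmeas (hX'.prodMk hU),
      (ProbabilityTheory.indepFun_iff_map_prod_eq_prod_map_map hX'.aemeasurable
        hU.aemeasurable).mp hindep, hlawX, hUlaw]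
  rw [hmain]
  haveI : IsProbabilityMeasure ((μ.prod ν).map h) :=
    Measure.isProbabilityMeasure_map hhmeas.aemeasurable
  haveI : IsProbabilityMeasure (P.map (fun ω => (X ω, Y ω))) :=
    Measure.isProbabilityMeasure_map (hX.prodMk hY).aemeasurable
  have hgen : (inferInstance : MeasurableSpace (ℝ × ℝ)) =
      MeasurableSpace.generateFrom
        (Set.image2 (· ×ˢ ·) (Set.range (Set.Iic : ℝ → Set ℝ))
          (Set.range (Set.Iic : ℝ → Set ℝ))) := by
    refine (generateFrom_eq_prod ?_ ?_ ?_ ?_).symm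
    · exact (borel_eq_generateFrom_Iic ℝ).symm.trans (BorelSpace.measurable_eq (α := ℝ)).symm
    · exact (borel_eq_generateFrom_Iic ℝ).symm.trans (BorelSpace.measurable_eq (α := ℝ)).symm
    · refine ⟨fun n => Set.Iic ((n:ℕ):ℝ), fun n => ⟨(n:ℝ), rfl⟩, ?_⟩
      ext y
      simp only [Set.mem_iUnion, Set.mem_Iic, Set.mem_univ, iff_true]
      exact exists_nat_ge y
    · refine ⟨fun n => Set.Iic ((n:ℕ):ℝ), fun n => ⟨(n:ℝ), rfl⟩, ?_⟩
      ext y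
      simp only [Set.mem_iUnion, Set.mem_Iic, Set.mem_univ, iff_true]
      exact exists_nat_ge y
  refine ext_of_generate_finite _ hgen (isPiSystem_Iic.prod isPiSystem_Iic) ?_ ?_
  · rintro _ ⟨_, ⟨a, rfl⟩, _, ⟨b, rfl⟩, rfl⟩
    rw [Measure.map_apply hhmeas (measurableSet_Iic.prod measurableSet_Iic),
      Measure.map_apply (hX.prodMk hY) (measurableSet_Iic.prod measurableSet_Iic)]
    have hRHS : (fun ω => (X ω, Y ω)) ⁻¹' (Set.Iic a ×ˢ Set.Iic b)
        = X ⁻¹' Set.Iic a ∩ Y ⁻¹' Set.Iic b := rfl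
    rw [hRHS, hreg _ _ measurableSet_Iic measurableSet_Iic]
    have hpremeas : MeasurableSet (h ⁻¹' (Set.Iic a ×ˢ Set.Iic b)) :=
      hhmeas (measurableSet_Iic.prod measurableSet_Iic)
    rw [Measure.prod_apply hpremeas, ← lintegral_indicator measurableSet_Iic _]
    apply lintegral_congr
    intro x
    haveI := hκprob x
    by_cases hxa : x ≤ a
    · have hslice : Prod.mk x ⁻¹' (h ⁻¹' (Set.Iic a ×ˢ Set.Iic b))
          = {v : ℝ | G (x, v) ≤ b} := by
        ext v
        simp only [Set.mem_preimage, Set.mem_prod, Set.mem_Iic, Set.mem_setOf_eq, hh]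
        exact ⟨fun hp => hp.2, fun hp => ⟨hxa, hp⟩⟩
      rw [hslice, hν, Measure.restrict_apply' measurableSet_Ioo]
      have hset2 : {v : ℝ | G (x, v) ≤ b} ∩ Set.Ioo (0:ℝ) 1
          = Set.Ioo (0:ℝ) 1 ∩ Set.Iic ((κ x (Set.Iic b)).toReal) := by
        ext v
        simp only [Set.mem_inter_iff, Set.mem_setOf_eq, Set.mem_Iic]
        constructor
        · rintro ⟨hGv, hv⟩
          refine ⟨hv, ?_⟩
          rw [hG] at hGv
          simp only [if_pos hv] at hGv
          exact (keylem16 κ hκprob x v hv.1 hv.2 b).mp hGv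
        · rintro ⟨hv, hvb⟩
          refine ⟨?_, hv⟩
          rw [hG]
          simp only [if_pos hv]
          exact (keylem16 κ hκprob x v hv.1 hv.2 b).mpr hvb
      rw [hset2, vollem16 _ (hF0 x b) (hF1 x b),
        ENNReal.ofReal_toReal (measure_ne_top _ _),
        Set.indicator_of_mem (Set.mem_Iic.mpr hxa)]
    · have hslice : Prod.mk x ⁻¹' (h ⁻¹' (Set.Iic a ×ˢ Set.Iic b)) = (∅ : Set ℝ) := by
        ext v
        simp only [Set.mem_preimage, Set.mem_prod, Set.mem_Iic, Set.mem_empty_iff_false,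
          iff_false, hh, not_and]
        intro hx
        exact absurd hx hxa
      rw [hslice, measure_empty, Set.indicator_of_notMem (by simpa using hxa)]
  · simp [measure_univ]
end
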